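/- Let Σ be a complete fan in Λ_ℝ associated to a root system Φ(Σ). Then the root lattice Λ_R and the weight lattice Λ_P of Φ(Σ) satisfy Λ_R ⊆ Λ ⊆ Λ_P. -/

import Mathlib

open scoped RealInnerProductSpace

namespace FanRS

variable {V : Type*} [NormedAddCommGroup V] [InnerProductSpace ℝ V]

/-- The (orthogonal) reflection in the hyperplane orthogonal to `a`. -/
noncomputable def reflAt (a : V) : V → V :=
  fun v => v - (2 * ⟪v, a⟫ / ⟪a, a⟫) • a

/-- The convex cone generated by a finite set `S`. -/
def coneOf (S : Finset V) : Set V :=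
  {v | ∃ c : V → ℝ, (∀ x, 0 ≤ c x) ∧ v = ∑ x ∈ S, c x • x}

/-- A strictly convex rational polyhedral cone with respect to the lattice `Λ`. -/
def IsLatticeCone (Λ : AddSubgroup V) (σ : Set V) : Prop :=
  ∃ S : Finset V, (S : Set V) ⊆ (Λ : Set V) ∧ σ = coneOf S ∧ ∀ v ∈ σ, -v ∈ σ → v = 0

/-- `F` is a face of the convex cone `σ`. -/
def IsFace (σ F : Set V) : Prop :=
  F ⊆ σ ∧ Convex ℝ F ∧ ∀ x ∈ σ, ∀ y ∈ σ, x + y ∈ F → x ∈ F ∧ y ∈ F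

/-- A fan in `Λ_ℝ`: a finite collection of rational polyhedral strictly convex cones,
closed under intersections (which are common faces) and under taking faces. -/
structure IsFan (Λ : AddSubgroup V) (F : Set (Set V)) : Prop where
  finite : F.Finite
  isCone : ∀ σ ∈ F, IsLatticeCone Λ σ
  inter_mem : ∀ σ ∈ F, ∀ τ ∈ F, σ ∩ τ ∈ F ∧ IsFace σ (σ ∩ τ) ∧ IsFace τ (σ ∩ τ)
  face_mem : ∀ σ ∈ F, ∀ τ, IsFace σ τ → τ ∈ F

/-- A complete fan: the cones cover the ambient space. -/
def IsComplete (F : Set (Set V)) : Prop := ⋃₀ F = Set.univ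

/-- `Λ` is a (full) lattice in `V`. -/
def IsLattice (Λ : AddSubgroup V) : Prop :=
  ∃ (m : ℕ) (b : Module.Basis (Fin m) ℝ V), Λ = AddSubgroup.closure (Set.range ⇑b)

/-- Dimension of a cone. -/
noncomputable def dim (σ : Set V) : ℕ := Module.finrank ℝ (Submodule.span ℝ σ)

/-- The automorphism group of a fan: lattice automorphisms mapping cones to cones. -/
def Aut (Λ : AddSubgroup V) (F : Set (Set V)) : Set (V ≃ₗ[ℝ] V) :=
  {f | ⇑f '' (Λ : Set V) = (Λ : Set V) ∧ ∀ σ ∈ F, ⇑f '' σ ∈ F}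

/-- The ray generated by `v`. -/
def rayOf (v : V) : Set V := {x | ∃ c : ℝ, 0 ≤ c ∧ x = c • v}

/-- The set `Prim(Σ)` of primitive lattice generators of the rays of the fan `F`. -/
def PrimFan (Λ : AddSubgroup V) (F : Set (Set V)) : Set V :=
  {v | v ∈ Λ ∧ v ≠ 0 ∧ rayOf v ∈ F ∧ ∀ u ∈ Λ, u ∈ rayOf v → ∃ k : ℕ, u = k • v}

/-- Every automorphism of the fan is an isometry (for the chosen inner product). -/
def AutIsometric (Λ : AddSubgroup V) (F : Set (Set V)) : Prop :=
  ∀ f ∈ Aut Λ F, ∀ v : V, ‖f v‖ = ‖v‖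

/-- The fan `F` is associated to a root system: for every facet (codimension-one cone)
`σ`, there is a reflection fixing the hyperplane spanned by `σ` that is an automorphism
of the fan. -/
def AssociatedToRS (Λ : AddSubgroup V) (F : Set (Set V)) : Prop :=
  ∀ σ ∈ F, dim σ + 1 = Module.finrank ℝ V →
    ∃ s ∈ Aut Λ F, s ≠ 1 ∧ s * s = 1 ∧ ∀ v ∈ Submodule.span ℝ σ, s v = v

/-- `Φ(Σ)`: the set of primitive lattice vectors normal to the facet hyperplanes. -/
def Phi (Λ : AddSubgroup V) (F : Set (Set V)) : Set V :=
  {a | ∃ σ ∈ F, dim σ + 1 = Module.finrank ℝ V ∧ a ∈ Λ ∧ a ≠ 0 ∧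
    (∀ v ∈ σ, ⟪a, v⟫ = 0) ∧
    ∀ u ∈ Λ, (∀ v ∈ σ, ⟪u, v⟫ = 0) → ∃ k : ℤ, u = k • a}

/-- The Weyl group of `Φ(Σ)`: generated by the reflections `s_α`, `α ∈ Φ(Σ)`. -/
def WeylOf (Λ : AddSubgroup V) (F : Set (Set V)) : Subgroup (V ≃ₗ[ℝ] V) :=
  Subgroup.closure {g : V ≃ₗ[ℝ] V | ∃ a ∈ Phi Λ F, ∀ v, g v = reflAt a v}

/-- A (closed) Weyl chamber of a finite set of vectors `Φ`. -/
def IsWeylChamber (Φ : Set V) (E : Set V) : Prop :=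
  ∃ u : V, (∀ a ∈ Φ, ⟪u, a⟫ ≠ 0) ∧ E = {v | ∀ a ∈ Φ, 0 ≤ ⟪u, a⟫ * ⟪v, a⟫}

end FanRS


section Aux11
open scoped RealInnerProductSpace
variable {V : Type*} [NormedAddCommGroup V] [InnerProductSpace ℝ V]

lemma aux11_inner_map (s : V ≃ₗ[ℝ] V) (h : ∀ v, ‖s v‖ = ‖v‖) (x y : V) :
    ⟪s x, s y⟫ = ⟪x, y⟫ := by
  rw [real_inner_eq_norm_add_mul_self_sub_norm_mul_self_sub_norm_mul_self_div_two,
    real_inner_eq_norm_add_mul_self_sub_norm_mul_self_sub_norm_mul_self_div_two x y,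
    ← map_add, h, h, h]

end Aux11

/-- for a complete fan `Σ` associated to a root system `Φ(Σ)`, the root
lattice `Λ_R` and the weight lattice `Λ_P` of `Φ(Σ)` satisfy `Λ_R ⊆ Λ ⊆ Λ_P`. -/
theorem statement11 {V : Type*} [NormedAddCommGroup V] [InnerProductSpace ℝ V]
    [FiniteDimensional ℝ V] (Λ : AddSubgroup V) (F : Set (Set V))
    (hΛ : FanRS.IsLattice Λ) (hF : FanRS.IsFan Λ F) (hc : FanRS.IsComplete F)
    (hiso : FanRS.AutIsometric Λ F) (hrs : FanRS.AssociatedToRS Λ F) :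
    ((AddSubgroup.closure (FanRS.Phi Λ F) : AddSubgroup V) : Set V) ⊆ (Λ : Set V) ∧
    (Λ : Set V) ⊆
      {v | ∀ a ∈ FanRS.Phi Λ F, ∃ k : ℤ, 2 * ⟪v, a⟫ / ⟪a, a⟫ = (k : ℝ)} := by
  constructor
  · have hle : AddSubgroup.closure (FanRS.Phi Λ F) ≤ Λ := by
      refine (AddSubgroup.closure_le _).mpr ?_
      rintro a ⟨σ, hσ, hd, haΛ, _⟩
      exact haΛ
    exact fun x hx => hle hx
  · intro v hv a ha
    obtain ⟨σ, hσF, hdim, haΛ, ha0, hperp, hprim⟩ := ha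
    obtain ⟨s, hsAut, hs1, hs2, hfix⟩ := hrs σ hσF hdim
    have hnorm := hiso s hsAut
    have hinner : ∀ x y : V, ⟪s x, s y⟫ = ⟪x, y⟫ := aux11_inner_map s hnorm
    have haa : ⟪a, a⟫ ≠ 0 := fun h => ha0 ((inner_self_eq_zero (𝕜 := ℝ)).mp h)
    have hss : ∀ w : V, s (s w) = w := by
      intro w
      have := congrArg (fun f : V ≃ₗ[ℝ] V => f w) hs2
      simpa using this
    -- span σ = (ℝ ∙ a)ᗮ
    have hle2 : Submodule.span ℝ σ ≤ (ℝ ∙ a)ᗮ := by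
      rw [Submodule.span_le]
      intro x hx
      exact Submodule.mem_orthogonal_singleton_iff_inner_right.mpr (hperp x hx)
    have hfr : Module.finrank ℝ (Submodule.span ℝ σ) = Module.finrank ℝ ((ℝ ∙ a)ᗮ) := by
      have h1 : Module.finrank ℝ (ℝ ∙ a) = 1 := finrank_span_singleton ha0
      have h2 := Submodule.finrank_add_finrank_orthogonal (K := (ℝ ∙ a))
      unfold FanRS.dim at hdim
      omega
    have hspan : Submodule.span ℝ σ = (ℝ ∙ a)ᗮ :=
      Submodule.eq_of_le_of_finrank_eq hle2 hfr
    have hfix' : ∀ x : V, ⟪x, a⟫ = 0 → s x = x := by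
      intro x hx
      exact hfix x (hspan ▸ Submodule.mem_orthogonal_singleton_iff_inner_left.mpr hx)
    -- s a = -a
    have hsa : s a = -a := by
      have hmem : s a ∈ (ℝ ∙ a) := by
        rw [← Submodule.orthogonal_orthogonal (ℝ ∙ a)]
        rw [Submodule.mem_orthogonal]
        intro x hx
        have hxa : ⟪x, a⟫ = 0 := Submodule.mem_orthogonal_singleton_iff_inner_left.mp hx
        calc ⟪x, s a⟫ = ⟪s x, s a⟫ := by rw [hfix' x hxa]
          _ = ⟪x, a⟫ := hinner x a
          _ = 0 := hxa
      obtain ⟨t, ht⟩ := Submodule.mem_span_singleton.mp hmem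
      have ht2 : (t * t) • a = a := by
        have := hss a
        rw [← ht] at this
        rw [map_smul, ← ht, smul_smul] at this
        exact this
      have htsq : t * t = 1 := by
        by_contra h
        have : (t * t - 1) • a = 0 := by
          rw [sub_smul, one_smul, ht2, sub_self]
        rcases smul_eq_zero.mp this with h' | h'
        · exact h (by linarith [sub_eq_zero.mp h'])
        · exact ha0 h'
      have hne1 : t ≠ 1 := by
        intro ht1
        apply hs1
        have hsall : ∀ w : V, s w = w := by
          intro w
          set c := ⟪w, a⟫ / ⟪a, a⟫ with hc
          have hdecomp : w = (w - c • a) + c • a := by abel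
          have hperpw : ⟪w - c • a, a⟫ = 0 := by
            rw [inner_sub_left, real_inner_smul_left, hc]
            field_simp
            ring
          have h1 : s (w - c • a) = w - c • a := hfix' _ hperpw
          have h2 : s (c • a) = c • a := by
            rw [map_smul, ← ht, ht1, one_smul]
          calc s w = s ((w - c • a) + c • a) := by rw [← hdecomp]
            _ = s (w - c • a) + s (c • a) := map_add _ _ _
            _ = (w - c • a) + c • a := by rw [h1, h2]
            _ = w := by abel
        exact LinearEquiv.ext hsall
      have htm1 : t = -1 := by
        rcases mul_self_eq_one_iff.mp htsq with h | h
        · exact absurd h hne1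
        · exact h
      rw [← ht, htm1, neg_one_smul]
    -- s v ∈ Λ, u := v - s v
    have hsvΛ : s v ∈ Λ := by
      have : s v ∈ ⇑s '' (Λ : Set V) := Set.mem_image_of_mem _ hv
      rwa [hsAut.1] at this
    have huΛ : v - s v ∈ Λ := Λ.sub_mem hv hsvΛ
    have huperp : ∀ x ∈ σ, ⟪v - s v, x⟫ = 0 := by
      intro x hx
      have hsx : s x = x := hfix x (Submodule.subset_span hx)
      rw [inner_sub_left]
      have : ⟪s v, x⟫ = ⟪v, x⟫ := by
        calc ⟪s v, x⟫ = ⟪s v, s x⟫ := by rw [hsx]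
          _ = ⟪v, x⟫ := hinner v x
      rw [this, sub_self]
    obtain ⟨k, hk⟩ := hprim (v - s v) huΛ huperp
    refine ⟨k, ?_⟩
    have hua : ⟪v - s v, a⟫ = 2 * ⟪v, a⟫ := by
      have hsva : ⟪s v, a⟫ = -⟪v, a⟫ := by
        have : ⟪s v, s a⟫ = ⟪v, a⟫ := hinner v a
        rw [hsa, inner_neg_right] at this
        linarith
      rw [inner_sub_left, hsva]
      ring
    have hka : ⟪v - s v, a⟫ = (k : ℝ) * ⟪a, a⟫ := by
      rw [hk, ← Int.cast_smul_eq_zsmul ℝ, real_inner_smul_left]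
    rw [hua] at hka
    field_simp
    linarith
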